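/- Let T > 0, let u : ℝⁿ × ℝᵖ → ℝ be continuously differentiable, let a, x₀ ∈ ℝⁿ, and let z, g : [0, T] → ℝⁿ be continuous. Define x(t) = x₀ + ∫₀ᵗ z(τ) dτ, h(t) = z₁(t) − ⟨a, x(t)⟩ − u(x(t), p), and Φ(z, p) = (1/2) ∫₀ᵀ h(t)² dt. Then for every p ∈ ℝᵖ and every direction (g, q) with q ∈ ℝᵖ, lim_{α → 0⁺} ( Φ(z + α g, p + α q) − Φ(z, p) ) / α = ∫₀ᵀ ⟨ h(t) e₁ − ∫_t^T h(τ) ( a + ∇ₓ u(x(τ), p) ) dτ , g(t) ⟩ dt − ⟨ ∫₀ᵀ h(t) ∇ₚ u(x(t), p) dt , q ⟩, where e₁ is the first standard basis vector of ℝⁿ. -/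

import Mathlib

open MeasureTheory Filter intervalIntegral

private lemma gd_swap_integral {T : ℝ} (φ ψ : ℝ → ℝ) (hφ : Continuous φ) (hψ : Continuous ψ) :
    (∫ t in (0:ℝ)..T, φ t * ∫ τ in (0:ℝ)..t, ψ τ)
      = ∫ t in (0:ℝ)..T, (∫ τ in t..T, φ τ) * ψ t := by
  set Ψ : ℝ → ℝ := fun t => ∫ τ in (0:ℝ)..t, ψ τ with hΨdef
  set F : ℝ → ℝ := fun t => ∫ τ in t..T, φ τ with hFdef
  have hΨd : ∀ t : ℝ, HasDerivAt Ψ (ψ t) t := fun t =>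
    intervalIntegral.integral_hasDerivAt_right (hψ.intervalIntegrable _ _)
      (hψ.stronglyMeasurableAtFilter _ _) hψ.continuousAt
  have hFd : ∀ t : ℝ, HasDerivAt F (-(φ t)) t := fun t =>
    intervalIntegral.integral_hasDerivAt_left (hφ.intervalIntegrable _ _)
      (hφ.stronglyMeasurableAtFilter _ _) hφ.continuousAt
  have hΨc : Continuous Ψ := by
    refine continuous_iff_continuousAt.2 fun t => ((hΨd t).differentiableAt).continuousAt
  have hFc : Continuous F := by
    refine continuous_iff_continuousAt.2 fun t => ((hFd t).differentiableAt).continuousAt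
  have key := intervalIntegral.integral_deriv_mul_eq_sub (a := 0) (b := T)
    (u := Ψ) (v := F) (u' := ψ) (v' := fun t => -(φ t))
    (fun t _ => hΨd t) (fun t _ => hFd t)
    (hψ.intervalIntegrable _ _) ((hφ.neg).intervalIntegrable _ _)
  have hΨ0 : Ψ 0 = 0 := by simp [hΨdef]
  have hFT : F T = 0 := by simp [hFdef]
  rw [hΨ0, hFT] at key
  have hsplit : (∫ t in (0:ℝ)..T, ψ t * F t + Ψ t * -(φ t))
      = (∫ t in (0:ℝ)..T, ψ t * F t) - ∫ t in (0:ℝ)..T, Ψ t * φ t := by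
    rw [← intervalIntegral.integral_sub (f := fun t => ψ t * F t) (g := fun t => Ψ t * φ t) ((hψ.mul hFc).intervalIntegrable _ _)
      ((hΨc.mul hφ).intervalIntegrable _ _)]
    congr 1; ext t; ring
  rw [hsplit] at key
  have : (∫ t in (0:ℝ)..T, ψ t * F t) = ∫ t in (0:ℝ)..T, Ψ t * φ t := by linarith
  calc (∫ t in (0:ℝ)..T, φ t * Ψ t) = ∫ t in (0:ℝ)..T, Ψ t * φ t := by
        congr 1; ext t; ring
    _ = ∫ t in (0:ℝ)..T, ψ t * F t := this.symm
    _ = ∫ t in (0:ℝ)..T, F t * ψ t := by congr 1; ext t; ring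


section
variable {n m : ℕ}
local notation "E" => Fin (n + 1) → ℝ
local notation "Q" => Fin m → ℝ

private lemma gd_fderiv_fst (u : (Fin (n + 1) → ℝ) → (Fin m → ℝ) → ℝ)
    (hu : ContDiff ℝ 1 (fun p : (Fin (n + 1) → ℝ) × (Fin m → ℝ) => u p.1 p.2))
    (y : E) (P : Q) (e : E) :
    fderiv ℝ (fun y' => u y' P) y e
      = fderiv ℝ (fun p : (Fin (n + 1) → ℝ) × (Fin m → ℝ) => u p.1 p.2) (y, P) (e, 0) := by
  have hι : HasFDerivAt (fun y' : E => ((y', P) : (Fin (n+1)→ℝ) × (Fin m→ℝ)))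
      ((ContinuousLinearMap.id ℝ (Fin (n+1)→ℝ)).prod 0) y :=
    (hasFDerivAt_id y).prodMk (hasFDerivAt_const P y)
  have hU := ((hu.differentiable one_ne_zero) (y, P)).hasFDerivAt
  have hcomp := hU.comp y hι
  have h2 : HasFDerivAt (fun y' => u y' P)
      ((fderiv ℝ (fun p : (Fin (n + 1) → ℝ) × (Fin m → ℝ) => u p.1 p.2) (y, P)).comp
        ((ContinuousLinearMap.id ℝ (Fin (n+1)→ℝ)).prod 0)) y := hcomp
  rw [h2.fderiv]
  simp

private lemma gd_fderiv_snd (u : (Fin (n + 1) → ℝ) → (Fin m → ℝ) → ℝ)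
    (hu : ContDiff ℝ 1 (fun p : (Fin (n + 1) → ℝ) × (Fin m → ℝ) => u p.1 p.2))
    (y : E) (P : Q) (e : Q) :
    fderiv ℝ (fun P' => u y P') P e
      = fderiv ℝ (fun p : (Fin (n + 1) → ℝ) × (Fin m → ℝ) => u p.1 p.2) (y, P) (0, e) := by
  have hι : HasFDerivAt (fun P' : Q => ((y, P') : (Fin (n+1)→ℝ) × (Fin m→ℝ)))
      ((0 : (Fin m → ℝ) →L[ℝ] (Fin (n+1)→ℝ)).prod (ContinuousLinearMap.id ℝ (Fin m→ℝ))) P :=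
    (hasFDerivAt_const y P).prodMk (hasFDerivAt_id P)
  have hU := ((hu.differentiable one_ne_zero) (y, P)).hasFDerivAt
  have hcomp := hU.comp P hι
  have h2 : HasFDerivAt (fun P' => u y P')
      ((fderiv ℝ (fun p : (Fin (n + 1) → ℝ) × (Fin m → ℝ) => u p.1 p.2) (y, P)).comp
        ((0 : (Fin m → ℝ) →L[ℝ] (Fin (n+1)→ℝ)).prod (ContinuousLinearMap.id ℝ (Fin m→ℝ)))) P := hcomp
  rw [h2.fderiv]
  simp

private lemma gd_fderiv_decomp (u : (Fin (n + 1) → ℝ) → (Fin m → ℝ) → ℝ)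
    (hu : ContDiff ℝ 1 (fun p : (Fin (n + 1) → ℝ) × (Fin m → ℝ) => u p.1 p.2))
    (y : E) (P : Q) (v : E) (w : Q) :
    fderiv ℝ (fun p : (Fin (n + 1) → ℝ) × (Fin m → ℝ) => u p.1 p.2) (y, P) (v, w)
      = (∑ j, fderiv ℝ (fun y' => u y' P) y (Pi.single j 1) * v j)
        + ∑ i, fderiv ℝ (fun P' => u y P') P (Pi.single i 1) * w i := by
  set D := fderiv ℝ (fun p : (Fin (n + 1) → ℝ) × (Fin m → ℝ) => u p.1 p.2) (y, P) with hD
  have hv : ((v, w) : (Fin (n+1)→ℝ) × (Fin m→ℝ))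
      = (∑ j, v j • ((Pi.single j 1 : E), (0 : Q))) + ∑ i, w i • ((0 : E), (Pi.single i 1 : Q)) := by
    ext k
    · simp [Prod.fst_sum, Prod.snd_sum, Finset.sum_apply, Pi.single_apply,
        Finset.sum_ite_eq', mul_comm]
    · simp [Prod.fst_sum, Prod.snd_sum, Finset.sum_apply, Pi.single_apply,
        Finset.sum_ite_eq', mul_comm]
  rw [hv, map_add, map_sum, map_sum]
  simp only [ContinuousLinearMap.map_smul, smul_eq_mul]
  congr 1
  · refine Finset.sum_congr rfl fun j _ => ?_
    rw [gd_fderiv_fst u hu, mul_comm]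
  · refine Finset.sum_congr rfl fun i _ => ?_
    rw [gd_fderiv_snd u hu, mul_comm]
end


private lemma gd_main {n m : ℕ} {T : ℝ} (hT : 0 < T)
    (u : (Fin (n + 1) → ℝ) → (Fin m → ℝ) → ℝ)
    (hu : ContDiff ℝ 1 (fun p : (Fin (n + 1) → ℝ) × (Fin m → ℝ) => u p.1 p.2))
    (a x₀ : Fin (n + 1) → ℝ) (z g : ℝ → Fin (n + 1) → ℝ)
    (hz : Continuous z) (hg : Continuous g)
    (x : ℝ → Fin (n + 1) → ℝ) (hx : ∀ t, x t = x₀ + ∫ τ in (0:ℝ)..t, z τ)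
    (gradx : (Fin (n + 1) → ℝ) → (Fin m → ℝ) → Fin (n + 1) → ℝ)
    (hgradx : ∀ y P j, gradx y P j = fderiv ℝ (fun y' => u y' P) y (Pi.single j 1))
    (gradp : (Fin (n + 1) → ℝ) → (Fin m → ℝ) → Fin m → ℝ)
    (hgradp : ∀ y P i, gradp y P i = fderiv ℝ (fun P' => u y P') P (Pi.single i 1))
    (P q : Fin m → ℝ)
    (h : ℝ → ℝ) (hh : ∀ t, h t = z t 0 - (∑ j, a j * x t j) - u (x t) P) :
    HasDerivAt (fun α : ℝ => (1 / 2) * ∫ t in (0:ℝ)..T,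
        (z t 0 + α * g t 0
          - (∑ j, a j * (x t j + α * (∫ τ in (0:ℝ)..t, g τ) j))
          - u (x t + α • ∫ τ in (0:ℝ)..t, g τ) (P + α • q)) ^ 2)
      ((∫ t in (0:ℝ)..T,
          h t * g t 0 - ∑ j, (∫ τ in t..T, h τ * (a j + gradx (x τ) P j)) * g t j)
        - ∑ i, (∫ t in (0:ℝ)..T, h t * gradp (x t) P i) * q i) 0 := by
  -- basic objects
  set G : ℝ → Fin (n + 1) → ℝ := fun t => ∫ τ in (0:ℝ)..t, g τ with hGdef
  set D : ((Fin (n + 1) → ℝ) × (Fin m → ℝ)) → ((Fin (n + 1) → ℝ) × (Fin m → ℝ)) →L[ℝ] ℝ :=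
    fderiv ℝ (fun p : (Fin (n + 1) → ℝ) × (Fin m → ℝ) => u p.1 p.2) with hDdef
  have hUc : Continuous (fun p : (Fin (n + 1) → ℝ) × (Fin m → ℝ) => u p.1 p.2) := hu.continuous
  have hDc : Continuous D := hu.continuous_fderiv one_ne_zero
  have hGc : Continuous G := by
    refine continuous_iff_continuousAt.2 fun t => ?_
    exact (intervalIntegral.integral_hasDerivAt_right (hg.intervalIntegrable _ _)
      (hg.stronglyMeasurableAtFilter _ _) hg.continuousAt).differentiableAt.continuousAt
  have hxc : Continuous x := by
    have : Continuous fun t => x₀ + ∫ τ in (0:ℝ)..t, z τ := by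
      refine continuous_const.add (continuous_iff_continuousAt.2 fun t => ?_)
      exact (intervalIntegral.integral_hasDerivAt_right (hz.intervalIntegrable _ _)
        (hz.stronglyMeasurableAtFilter _ _) hz.continuousAt).differentiableAt.continuousAt
    exact this.congr fun t => (hx t).symm
  have hhc : Continuous h := by
    have : Continuous fun t => z t 0 - (∑ j, a j * x t j) - u (x t) P := by
      refine (((continuous_apply 0).comp hz).sub ?_).sub
        (hUc.comp (hxc.prodMk continuous_const))
      exact continuous_finset_sum _ fun j _ =>
        continuous_const.mul ((continuous_apply j).comp hxc)
    exact this.congr fun t => (hh t).symm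
  -- H and its α-derivative
  set H : ℝ → ℝ → ℝ := fun α t => z t 0 + α * g t 0
      - (∑ j, a j * (x t j + α * G t j)) - u (x t + α • G t) (P + α • q) with hHdef
  set H' : ℝ → ℝ → ℝ := fun α t => g t 0 - (∑ j, a j * G t j)
      - D (x t + α • G t, P + α • q) (G t, q) with hH'def
  have hcurve : ∀ (α t : ℝ), HasDerivAt
      (fun β : ℝ => ((x t + β • G t, P + β • q) : (Fin (n+1)→ℝ) × (Fin m→ℝ)))
      (G t, q) α := by
    intro α t
    have := ((hasDerivAt_const α (x t)).add ((hasDerivAt_id α).smul_const (G t))).prodMk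
      ((hasDerivAt_const α P).add ((hasDerivAt_id α).smul_const q))
    simpa using this
  have hHd : ∀ (α t : ℝ), HasDerivAt (fun β => H β t) (H' α t) α := by
    intro α t
    have h1 : HasDerivAt (fun β : ℝ => z t 0 + β * g t 0) (g t 0) α := by
      have := ((hasDerivAt_id α).mul_const (g t 0)).const_add (z t 0)
      simpa using this
    have h2 : HasDerivAt (fun β : ℝ => ∑ j, a j * (x t j + β * G t j))
        (∑ j, a j * G t j) α := by
      refine HasDerivAt.fun_sum fun j _ => ?_
      simpa using ((hasDerivAt_const α (x t j)).add
        ((hasDerivAt_id α).mul_const (G t j))).const_mul (a j)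
    have h3 : HasDerivAt (fun β : ℝ => u (x t + β • G t) (P + β • q))
        (D (x t + α • G t, P + α • q) (G t, q)) α := by
      have hU := ((hu.differentiable one_ne_zero) (x t + α • G t, P + α • q)).hasFDerivAt
      exact hU.comp_hasDerivAt α (hcurve α t)
    exact (h1.sub h2).sub h3
  -- joint continuity
  have hHc : Continuous fun p : ℝ × ℝ => H p.1 p.2 := by
    have hz0 : Continuous fun p : ℝ × ℝ => z p.2 0 := (continuous_apply 0).comp (hz.comp continuous_snd)
    have hg0 : Continuous fun p : ℝ × ℝ => g p.2 0 := (continuous_apply 0).comp (hg.comp continuous_snd)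
    refine ((hz0.add (continuous_fst.mul hg0)).sub ?_).sub
      (hUc.comp (((hxc.comp continuous_snd).add
        (continuous_fst.smul (hGc.comp continuous_snd))).prodMk
        (continuous_const.add (continuous_fst.smul continuous_const))))
    exact continuous_finset_sum _ fun j _ => continuous_const.mul
      (((continuous_apply j).comp (hxc.comp continuous_snd)).add
        (continuous_fst.mul ((continuous_apply j).comp (hGc.comp continuous_snd))))
  have hH'c : Continuous fun p : ℝ × ℝ => H' p.1 p.2 := by
    have hg0 : Continuous fun p : ℝ × ℝ => g p.2 0 := (continuous_apply 0).comp (hg.comp continuous_snd)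
    refine (hg0.sub ?_).sub ?_
    · exact continuous_finset_sum _ fun j _ => continuous_const.mul
        ((continuous_apply j).comp (hGc.comp continuous_snd))
    · refine Continuous.clm_apply (hDc.comp (((hxc.comp continuous_snd).add
        (continuous_fst.smul (hGc.comp continuous_snd))).prodMk
        (continuous_const.add (continuous_fst.smul continuous_const))))
        (((hGc.comp continuous_snd)).prodMk continuous_const)
  -- uniform bound on a compact neighborhood
  have hKc : Continuous fun p : ℝ × ℝ => 2 * H p.1 p.2 * H' p.1 p.2 :=
    (continuous_const.mul hHc).mul hH'c
  obtain ⟨C, hC⟩ := ((isCompact_Icc (a := (-1:ℝ)) (b := 1)).prod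
    (isCompact_Icc (a := (0:ℝ)) (b := T))).exists_bound_of_continuousOn hKc.continuousOn
  have hHa : ∀ α : ℝ, Continuous fun t => H α t := fun α => hHc.comp (Continuous.prodMk_right α)
  have hH'a : ∀ α : ℝ, Continuous fun t => H' α t := fun α => hH'c.comp (Continuous.prodMk_right α)
  have h_bound : ∀ᵐ t ∂(volume : Measure ℝ), t ∈ Set.uIoc (0:ℝ) T →
      ∀ α ∈ Metric.ball (0:ℝ) 1, ‖2 * H α t * H' α t‖ ≤ C := by
    refine ae_of_all _ fun t ht α hα => ?_
    refine hC (α, t) ⟨?_, ?_⟩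
    · have : |α| < 1 := by simpa [Real.dist_eq] using hα
      exact ⟨by linarith [abs_le.1 this.le |>.1], by linarith [abs_le.1 this.le |>.2]⟩
    · rw [Set.uIoc_of_le hT.le] at ht
      exact Set.Ioc_subset_Icc_self ht
  have h_diff : ∀ᵐ t ∂(volume : Measure ℝ), t ∈ Set.uIoc (0:ℝ) T →
      ∀ α ∈ Metric.ball (0:ℝ) 1, HasDerivAt (fun β => H β t ^ 2) (2 * H α t * H' α t) α := by
    refine ae_of_all _ fun t _ α _ => ?_
    have := (hHd α t).pow 2
    norm_num at this
    exact this
  have main := intervalIntegral.hasDerivAt_integral_of_dominated_loc_of_deriv_le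
    (F := fun α t => H α t ^ 2) (F' := fun α t => 2 * H α t * H' α t) (x₀ := (0:ℝ))
    (a := 0) (b := T) (bound := fun _ => C) (s := Metric.ball (0:ℝ) 1) (Metric.ball_mem_nhds _ one_pos)
    (Filter.Eventually.of_forall fun α => ((hHa α).pow 2).aestronglyMeasurable)
    (((hHa 0).pow 2).intervalIntegrable _ _)
    (((continuous_const.mul (hHa 0)).mul (hH'a 0)).aestronglyMeasurable)
    h_bound (intervalIntegrable_const) h_diff
  have hder := main.2.const_mul (1/2 : ℝ)
  -- identify H 0 and H' 0
  have hH0 : ∀ t, H 0 t = h t := by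
    intro t
    rw [hh t]
    simp [hHdef]
  have hH'0 : ∀ t, H' 0 t = g t 0 - (∑ j, a j * G t j)
      - ((∑ j, gradx (x t) P j * G t j) + ∑ i, gradp (x t) P i * q i) := by
    intro t
    have e0 : H' 0 t = g t 0 - (∑ j, a j * G t j) - D (x t, P) (G t, q) := by
      simp [hH'def]
    rw [e0, hDdef, gd_fderiv_decomp u hu (x t) P (G t) q]
    simp only [← hgradx, ← hgradp]
  -- continuity of the gradient terms along the trajectory
  have hgxc : ∀ j, Continuous fun t => gradx (x t) P j := by
    intro j
    have hc : Continuous fun t => D (x t, P) ((Pi.single j 1 : Fin (n+1) → ℝ), (0 : Fin m → ℝ)) :=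
      (hDc.comp (hxc.prodMk continuous_const)).clm_apply continuous_const
    refine hc.congr fun t => ?_
    rw [hgradx, gd_fderiv_fst u hu, hDdef]
  have hgpc : ∀ i, Continuous fun t => gradp (x t) P i := by
    intro i
    have hc : Continuous fun t => D (x t, P) ((0 : Fin (n+1) → ℝ), (Pi.single i 1 : Fin m → ℝ)) :=
      (hDc.comp (hxc.prodMk continuous_const)).clm_apply continuous_const
    refine hc.congr fun t => ?_
    rw [hgradp, gd_fderiv_snd u hu, hDdef]
  have hGjc : ∀ j, Continuous fun t => G t j := fun j => (continuous_apply j).comp hGc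
  have hgj : ∀ j, Continuous fun t => g t j := fun j => (continuous_apply j).comp hg
  have hφc : ∀ j, Continuous fun t => h t * (a j + gradx (x t) P j) :=
    fun j => hhc.mul (continuous_const.add (hgxc j))
  have hFjc : ∀ j, Continuous fun t => ∫ τ in t..T, h τ * (a j + gradx (x τ) P j) := by
    intro j
    refine continuous_iff_continuousAt.2 fun t => ?_
    exact (intervalIntegral.integral_hasDerivAt_left ((hφc j).intervalIntegrable _ _)
      ((hφc j).stronglyMeasurableAtFilter _ _) (hφc j).continuousAt).differentiableAt.continuousAt
  have hGapp : ∀ (t : ℝ) (j : Fin (n+1)), G t j = ∫ τ in (0:ℝ)..t, g τ j := by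
    intro t j
    have := (ContinuousLinearMap.proj (R := ℝ) (φ := fun _ : Fin (n+1) => ℝ)
      j).intervalIntegral_comp_comm (hg.intervalIntegrable (μ := volume) 0 t)
    simpa [hGdef] using this.symm
  -- integrand expansion
  have hintegrand : ∀ t, h t * H' 0 t
      = h t * g t 0 - (∑ j, (h t * (a j + gradx (x t) P j)) * G t j)
        - ∑ i, (h t * gradp (x t) P i) * q i := by
    intro t
    rw [hH'0 t]
    simp only [mul_sub, mul_add, add_mul, mul_assoc, Finset.mul_sum, Finset.sum_add_distrib]
    ring
  have i1 : IntervalIntegrable (fun t => h t * g t 0) volume 0 T :=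
    (hhc.mul (hgj 0)).intervalIntegrable _ _
  have i2 : IntervalIntegrable (fun t => ∑ j, (h t * (a j + gradx (x t) P j)) * G t j) volume 0 T :=
    (continuous_finset_sum _ fun j _ => ((hφc j).mul (hGjc j))).intervalIntegrable _ _
  have i3 : IntervalIntegrable (fun t => ∑ i, (h t * gradp (x t) P i) * q i) volume 0 T :=
    (continuous_finset_sum _ fun i _ => ((hhc.mul (hgpc i)).mul continuous_const)).intervalIntegrable _ _
  have hI : (∫ t in (0:ℝ)..T, h t * H' 0 t)
      = (∫ t in (0:ℝ)..T, h t * g t 0)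
        - (∑ j, ∫ t in (0:ℝ)..T, (h t * (a j + gradx (x t) P j)) * G t j)
        - ∑ i, (∫ t in (0:ℝ)..T, h t * gradp (x t) P i) * q i := by
    have e := intervalIntegral.integral_congr (a := (0:ℝ)) (b := T) (μ := volume)
      (f := fun t => h t * H' 0 t)
      (g := fun t => (h t * g t 0 - ∑ j, (h t * (a j + gradx (x t) P j)) * G t j)
        - ∑ i, (h t * gradp (x t) P i) * q i) (fun t _ => hintegrand t)
    rw [e, intervalIntegral.integral_sub (i1.sub i2) i3, intervalIntegral.integral_sub i1 i2,
      intervalIntegral.integral_finset_sum (f := fun j t => (h t * (a j + gradx (x t) P j)) * G t j)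
        (fun j _ => ((hφc j).mul (hGjc j)).intervalIntegrable _ _),
      intervalIntegral.integral_finset_sum (f := fun i t => (h t * gradp (x t) P i) * q i)
        (fun i _ => ((hhc.mul (hgpc i)).mul continuous_const).intervalIntegrable _ _)]
    congr 1
    exact Finset.sum_congr rfl fun i _ => intervalIntegral.integral_mul_const _ _
  have hswap : ∀ j, (∫ t in (0:ℝ)..T, (h t * (a j + gradx (x t) P j)) * G t j)
      = ∫ t in (0:ℝ)..T, (∫ τ in t..T, h τ * (a j + gradx (x τ) P j)) * g t j := by
    intro j
    have e1 : (∫ t in (0:ℝ)..T, (h t * (a j + gradx (x t) P j)) * G t j)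
        = ∫ t in (0:ℝ)..T, (h t * (a j + gradx (x t) P j)) * ∫ τ in (0:ℝ)..t, g τ j := by
      refine intervalIntegral.integral_congr fun t _ => ?_
      rw [hGapp t j]
    rw [e1]
    exact gd_swap_integral _ _ (hφc j) (hgj j)
  have hRHS : (∫ t in (0:ℝ)..T,
        h t * g t 0 - ∑ j, (∫ τ in t..T, h τ * (a j + gradx (x τ) P j)) * g t j)
      = (∫ t in (0:ℝ)..T, h t * g t 0)
        - ∑ j, ∫ t in (0:ℝ)..T, (∫ τ in t..T, h τ * (a j + gradx (x τ) P j)) * g t j := by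
    rw [intervalIntegral.integral_sub (g := fun t => ∑ j, (∫ τ in t..T, h τ * (a j + gradx (x τ) P j)) * g t j) i1
        ((continuous_finset_sum _ fun j _ => (hFjc j).mul (hgj j)).intervalIntegrable _ _),
      intervalIntegral.integral_finset_sum (f := fun j t => (∫ τ in t..T, h τ * (a j + gradx (x τ) P j)) * g t j)
        (fun j _ => ((hFjc j).mul (hgj j)).intervalIntegrable _ _)]
  have hval : (1/2 : ℝ) * (∫ t in (0:ℝ)..T, 2 * H 0 t * H' 0 t)
      = (∫ t in (0:ℝ)..T,
          h t * g t 0 - ∑ j, (∫ τ in t..T, h τ * (a j + gradx (x τ) P j)) * g t j)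
        - ∑ i, (∫ t in (0:ℝ)..T, h t * gradp (x t) P i) * q i := by
    have e2 : (∫ t in (0:ℝ)..T, 2 * H 0 t * H' 0 t)
        = 2 * ∫ t in (0:ℝ)..T, h t * H' 0 t := by
      rw [← intervalIntegral.integral_const_mul]
      refine intervalIntegral.integral_congr fun t _ => ?_
      rw [hH0 t]; ring
    rw [e2, hI, hRHS]
    simp only [hswap]
    ring
  exact hval ▸ hder
/-- Gâteaux derivative of the one-coordinate residual functional
`Φ(z, p) = (1/2)∫₀ᵀ h(t)² dt`, `h(t) = z₁(t) - ⟨a, x(t)⟩ - u(x(t), p)`,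
`x(t) = x₀ + ∫₀ᵗ z`, at `(z, p)` in the direction `(g, q)`:
`∫₀ᵀ ⟨h(t)e₁ - ∫ₜᵀ h(τ)(a + ∇ₓu(x(τ),p)) dτ, g(t)⟩ dt - ⟨∫₀ᵀ h(t) ∇ₚu(x(t),p) dt, q⟩`. -/
theorem gateaux_derivative_of_Phi (n m : ℕ) (T : ℝ) (hT : 0 < T)
    (u : (Fin (n + 1) → ℝ) → (Fin m → ℝ) → ℝ)
    (hu : ContDiff ℝ 1 (fun q : (Fin (n + 1) → ℝ) × (Fin m → ℝ) => u q.1 q.2))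
    (a x₀ : Fin (n + 1) → ℝ) (z g : ℝ → Fin (n + 1) → ℝ)
    (hz : ContinuousOn z (Set.Icc 0 T)) (hg : ContinuousOn g (Set.Icc 0 T))
    (x : ℝ → Fin (n + 1) → ℝ) (hx : ∀ t, x t = x₀ + ∫ τ in (0:ℝ)..t, z τ)
    (gradx : (Fin (n + 1) → ℝ) → (Fin m → ℝ) → Fin (n + 1) → ℝ)
    (hgradx : ∀ y P j, gradx y P j = fderiv ℝ (fun y' => u y' P) y (Pi.single j 1))
    (gradp : (Fin (n + 1) → ℝ) → (Fin m → ℝ) → Fin m → ℝ)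
    (hgradp : ∀ y P i, gradp y P i = fderiv ℝ (fun P' => u y P') P (Pi.single i 1))
    (P q : Fin m → ℝ)
    (h : ℝ → ℝ) (hh : ∀ t, h t = z t 0 - (∑ j, a j * x t j) - u (x t) P)
    (Φ : (ℝ → Fin (n + 1) → ℝ) → (Fin m → ℝ) → ℝ)
    (hΦ : ∀ w P', Φ w P' = (1 / 2) * ∫ t in (0:ℝ)..T,
      (w t 0 - (∑ j, a j * (x₀ + ∫ τ in (0:ℝ)..t, w τ) j)
        - u (x₀ + ∫ τ in (0:ℝ)..t, w τ) P') ^ 2) :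
    Tendsto (fun α => (Φ (fun t => z t + α • g t) (P + α • q) - Φ z P) / α)
      (nhdsWithin 0 (Set.Ioi 0))
      (nhds ((∫ t in (0:ℝ)..T,
          h t * g t 0 - ∑ j, (∫ τ in t..T, h τ * (a j + gradx (x τ) P j)) * g t j)
        - ∑ i, (∫ t in (0:ℝ)..T, h t * gradp (x t) P i) * q i)) := by
  -- continuous extensions of `z` and `g` beyond `[0, T]`
  set zE : ℝ → Fin (n + 1) → ℝ := Set.IccExtend hT.le ((Set.Icc (0:ℝ) T).restrict z) with hzEdef
  set gE : ℝ → Fin (n + 1) → ℝ := Set.IccExtend hT.le ((Set.Icc (0:ℝ) T).restrict g) with hgEdef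
  have hzEc : Continuous zE := hz.restrict.Icc_extend'
  have hgEc : Continuous gE := hg.restrict.Icc_extend'
  have hzE : ∀ t ∈ Set.Icc (0:ℝ) T, zE t = z t := fun t ht => Set.IccExtend_of_mem _ _ ht
  have hgE : ∀ t ∈ Set.Icc (0:ℝ) T, gE t = g t := fun t ht => Set.IccExtend_of_mem _ _ ht
  set xE : ℝ → Fin (n + 1) → ℝ := fun t => x₀ + ∫ τ in (0:ℝ)..t, zE τ with hxEdef
  set hE : ℝ → ℝ := fun t => zE t 0 - (∑ j, a j * xE t j) - u (xE t) P with hhEdef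
  -- primitives agree on `[0, T]`
  have hsubIcc : ∀ t ∈ Set.Icc (0:ℝ) T, Set.uIcc (0:ℝ) t ⊆ Set.Icc (0:ℝ) T := by
    intro t ht
    rw [Set.uIcc_of_le ht.1]
    exact Set.Icc_subset_Icc le_rfl ht.2
  have hintz : ∀ t ∈ Set.Icc (0:ℝ) T,
      (∫ τ in (0:ℝ)..t, zE τ) = ∫ τ in (0:ℝ)..t, z τ := by
    intro t ht
    exact intervalIntegral.integral_congr fun τ hτ => hzE τ (hsubIcc t ht hτ)
  have hintg : ∀ t ∈ Set.Icc (0:ℝ) T,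
      (∫ τ in (0:ℝ)..t, gE τ) = ∫ τ in (0:ℝ)..t, g τ := by
    intro t ht
    exact intervalIntegral.integral_congr fun τ hτ => hgE τ (hsubIcc t ht hτ)
  have hxeq : ∀ t ∈ Set.Icc (0:ℝ) T, xE t = x t := by
    intro t ht
    show x₀ + (∫ τ in (0:ℝ)..t, zE τ) = x t
    rw [hintz t ht, ← hx t]
  have hheq : ∀ t ∈ Set.Icc (0:ℝ) T, hE t = h t := by
    intro t ht
    show zE t 0 - (∑ j, a j * xE t j) - u (xE t) P = h t
    simp only [hzE t ht, hxeq t ht]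
    rw [← hh t]
  -- the main derivative computation for the extended data
  have key := gd_main hT u hu a x₀ zE gE hzEc hgEc xE (fun t => rfl)
    gradx hgradx gradp hgradp P q hE (fun t => rfl)
  -- Φ along the perturbation equals the extended functional
  have hA : ∀ α : ℝ, Φ (fun t => z t + α • g t) (P + α • q)
      = (1 / 2 : ℝ) * ∫ t in (0:ℝ)..T,
        (zE t 0 + α * gE t 0
          - (∑ j, a j * (xE t j + α * (∫ τ in (0:ℝ)..t, gE τ) j))
          - u (xE t + α • ∫ τ in (0:ℝ)..t, gE τ) (P + α • q)) ^ 2 := by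
    intro α
    rw [hΦ]
    congr 1
    refine intervalIntegral.integral_congr fun t ht' => ?_
    have ht : t ∈ Set.Icc (0:ℝ) T := by rwa [Set.uIcc_of_le hT.le] at ht'
    have hiz : IntervalIntegrable z volume 0 t := (hz.mono (hsubIcc t ht)).intervalIntegrable
    have hig : IntervalIntegrable g volume 0 t := (hg.mono (hsubIcc t ht)).intervalIntegrable
    have hsplit : (∫ τ in (0:ℝ)..t, (z τ + α • g τ))
        = (∫ τ in (0:ℝ)..t, z τ) + α • ∫ τ in (0:ℝ)..t, g τ := by
      rw [intervalIntegral.integral_add (g := fun τ => α • g τ) hiz (hig.smul α),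
        intervalIntegral.integral_smul]
    have hxx : (x₀ + ∫ τ in (0:ℝ)..t, (z τ + α • g τ))
        = xE t + α • ∫ τ in (0:ℝ)..t, gE τ := by
      rw [hsplit, ← hintz t ht, ← hintg t ht]
      show x₀ + ((∫ τ in (0:ℝ)..t, zE τ) + α • ∫ τ in (0:ℝ)..t, gE τ)
        = (x₀ + ∫ τ in (0:ℝ)..t, zE τ) + α • ∫ τ in (0:ℝ)..t, gE τ
      rw [add_assoc]
    have h0 : (z t + α • g t) 0 = zE t 0 + α * gE t 0 := by
      simp [hzE t ht, hgE t ht]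
    rw [h0, hxx]
    simp only [Pi.add_apply, Pi.smul_apply, smul_eq_mul]
  -- value at `0`
  have hB : Φ z P = (1 / 2 : ℝ) * ∫ t in (0:ℝ)..T,
      (zE t 0 + (0:ℝ) * gE t 0
        - (∑ j, a j * (xE t j + (0:ℝ) * (∫ τ in (0:ℝ)..t, gE τ) j))
        - u (xE t + (0:ℝ) • ∫ τ in (0:ℝ)..t, gE τ) (P + (0:ℝ) • q)) ^ 2 := by
    have e0 : (fun t => z t + (0:ℝ) • g t) = z := funext fun t => by simp
    have e1 : P + (0:ℝ) • q = P := by simp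
    conv_lhs => rw [← e1, ← e0]
    exact hA 0
  -- the derivative value for the extended data equals the stated one
  have hC : ((∫ t in (0:ℝ)..T,
        hE t * gE t 0 - ∑ j, (∫ τ in t..T, hE τ * (a j + gradx (xE τ) P j)) * gE t j)
      - ∑ i, (∫ t in (0:ℝ)..T, hE t * gradp (xE t) P i) * q i)
      = ((∫ t in (0:ℝ)..T,
        h t * g t 0 - ∑ j, (∫ τ in t..T, h τ * (a j + gradx (x τ) P j)) * g t j)
      - ∑ i, (∫ t in (0:ℝ)..T, h t * gradp (x t) P i) * q i) := by
    congr 1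
    · refine intervalIntegral.integral_congr fun t ht' => ?_
      have ht : t ∈ Set.Icc (0:ℝ) T := by rwa [Set.uIcc_of_le hT.le] at ht'
      have hinner : ∀ j, (∫ τ in t..T, hE τ * (a j + gradx (xE τ) P j))
          = ∫ τ in t..T, h τ * (a j + gradx (x τ) P j) := by
        intro j
        refine intervalIntegral.integral_congr fun τ hτ => ?_
        have hτ' : τ ∈ Set.Icc (0:ℝ) T := by
          rw [Set.uIcc_of_le ht.2] at hτ
          exact ⟨le_trans ht.1 hτ.1, hτ.2⟩
        rw [hheq τ hτ', hxeq τ hτ']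
      simp only [hinner, hheq t ht, hgE t ht]
    · refine Finset.sum_congr rfl fun i _ => ?_
      congr 1
      refine intervalIntegral.integral_congr fun t ht' => ?_
      have ht : t ∈ Set.Icc (0:ℝ) T := by rwa [Set.uIcc_of_le hT.le] at ht'
      rw [hheq t ht, hxeq t ht]
  rw [← hC]
  have hslope := (hasDerivAt_iff_tendsto_slope.1 key).mono_left
    (nhdsWithin_mono (0:ℝ) (fun α (hα : α ∈ Set.Ioi (0:ℝ)) => by
      simpa using (ne_of_gt hα)))
  refine hslope.congr fun α => ?_
  simp only [slope_def_field, sub_zero]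
  rw [hA α, hB]
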